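/- Let K be a field, n ≥ 2, and let θ be a point-domestic collineation of the symplectic polar space C_{n,1}(K) induced by a semilinear similitude g (so ω(x,gx) = 0 for all x ∈ K^{2n}). Then for every point p = ⟨x⟩ with p^θ ≠ p the line ⟨p, p^θ⟩ is fixed by θ; equivalently, g²x ∈ span{x, gx} for every x ∈ K^{2n}. -/
import Mathlib


/-!
STATEMENT 4: If θ is a point-domestic collineation of C_{n,1}(K), n ≥ 2, induced by a
semilinear similitude g, then for every point p = ⟨x⟩ with p^θ ≠ p the line ⟨p, p^θ⟩ is
fixed by θ; equivalently, g²x ∈ span{x, gx} for every x ∈ K^{2n}.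
-/

open Module Submodule

noncomputable section

/-- `K^{2n}`, written as pairs of `n`-tuples. -/
abbrev Vs (K : Type) (n : ℕ) : Type := (Fin n → K) × (Fin n → K)

/-- The standard symplectic form on `K^{2n}`. -/
def sform {K : Type} [Field K] {n : ℕ} (x y : Vs K n) : K :=
  ∑ j, (x.1 j * y.2 j - x.2 j * y.1 j)

/-- `g` is a `σ`-semilinear bijection of `K^{2n}` which is a similitude of the standard
symplectic form; such a `g` induces a collineation of `C_{n,1}(K)`. -/
structure IsSymplecticCollineation {K : Type} [Field K] {n : ℕ} (σ : K ≃+* K) (lam : K)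
    (g : Vs K n → Vs K n) : Prop where
  bij : Function.Bijective g
  map_add : ∀ x y, g (x + y) = g x + g y
  map_smulc : ∀ (a : K) (x : Vs K n), g (a • x) = σ a • g x
  lam_ne : lam ≠ 0
  sim : ∀ x y, sform (g x) (g y) = lam * σ (sform x y)

section Aux

variable {K : Type} [Field K] {n : ℕ}

lemma sform_add_left (x x' y : Vs K n) : sform (x + x') y = sform x y + sform x' y := by
  unfold sform
  rw [← Finset.sum_add_distrib]
  exact Finset.sum_congr rfl fun j _ => by
    simp only [Prod.fst_add, Prod.snd_add, Pi.add_apply]; ring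

lemma sform_add_right (x y y' : Vs K n) : sform x (y + y') = sform x y + sform x y' := by
  unfold sform
  rw [← Finset.sum_add_distrib]
  exact Finset.sum_congr rfl fun j _ => by
    simp only [Prod.fst_add, Prod.snd_add, Pi.add_apply]; ring

lemma sform_smul_left (a : K) (x y : Vs K n) : sform (a • x) y = a * sform x y := by
  unfold sform
  rw [Finset.mul_sum]
  exact Finset.sum_congr rfl fun j _ => by
    simp only [Prod.smul_fst, Prod.smul_snd, Pi.smul_apply, smul_eq_mul]; ring

lemma sform_smul_right (a : K) (x y : Vs K n) : sform x (a • y) = a * sform x y := by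
  unfold sform
  rw [Finset.mul_sum]
  exact Finset.sum_congr rfl fun j _ => by
    simp only [Prod.smul_fst, Prod.smul_snd, Pi.smul_apply, smul_eq_mul]; ring

lemma sform_antisymm (x y : Vs K n) : sform x y = - sform y x := by
  unfold sform
  rw [← Finset.sum_neg_distrib]
  exact Finset.sum_congr rfl fun j _ => by ring

lemma sform_sub_right (x y y' : Vs K n) : sform x (y - y') = sform x y - sform x y' := by
  unfold sform
  rw [← Finset.sum_sub_distrib]
  exact Finset.sum_congr rfl fun j _ => by
    simp only [Prod.fst_sub, Prod.snd_sub, Pi.sub_apply]; ring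

lemma sform_nondeg (x : Vs K n) (h : ∀ y, sform y x = 0) : x = 0 := by
  have h2 : ∀ j, x.2 j = 0 := by
    intro j
    have h1 := h (Pi.single j 1, 0)
    simp only [sform, Pi.single_apply, Pi.zero_apply, ite_mul, one_mul, zero_mul,
      mul_zero, sub_zero] at h1
    rwa [Finset.sum_ite_eq' _ j (fun i => x.2 i), if_pos (Finset.mem_univ j)] at h1
  have h1 : ∀ j, x.1 j = 0 := by
    intro j
    have h1 := h (0, Pi.single j 1)
    simp only [sform, Pi.single_apply, Pi.zero_apply, ite_mul, one_mul, zero_mul,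
      mul_zero, zero_sub, zero_mul] at h1
    rw [Finset.sum_neg_distrib, neg_eq_zero] at h1
    rwa [Finset.sum_ite_eq' _ j (fun i => x.1 i), if_pos (Finset.mem_univ j)] at h1
  ext j
  · exact h1 j
  · exact h2 j

variable {σ : K ≃+* K} {lam : K} {g : Vs K n → Vs K n}

lemma polar (hg : IsSymplecticCollineation σ lam g) (hpd : ∀ x : Vs K n, sform x (g x) = 0)
    (x y : Vs K n) : sform x (g y) = - sform y (g x) := by
  have h := hpd (x + y)
  rw [hg.map_add, sform_add_left, sform_add_right, sform_add_right, hpd x, hpd y] at h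
  linear_combination h

lemma key (hg : IsSymplecticCollineation σ lam g) (hpd : ∀ x : Vs K n, sform x (g x) = 0)
    (y x : Vs K n) : sform y (g (g x)) = lam * σ (sform y x) := by
  obtain ⟨z, rfl⟩ := hg.bij.2 y
  have h1 : sform z (g x) = sform (g z) x := by
    rw [polar hg hpd z x, sform_antisymm x (g z), neg_neg]
  rw [hg.sim z (g x), h1]

lemma sigma_id (hn : 2 ≤ n) (hg : IsSymplecticCollineation σ lam g)
    (hpd : ∀ x : Vs K n, sform x (g x) = 0) (a : K) : σ a = a := by
  have i0 : Fin n := ⟨0, by omega⟩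
  set x₀ : Vs K n := (Pi.single i0 1, 0) with hx₀def
  have hx₀ : x₀ ≠ 0 := by
    intro h
    have := congrArg (fun v : Vs K n => v.1 i0) h
    simp [hx₀def, Pi.single_apply] at this
  obtain ⟨y₀, hc⟩ : ∃ y₀, sform y₀ x₀ ≠ 0 := by
    by_contra h
    push_neg at h
    exact hx₀ (sform_nondeg x₀ h)
  have hσc : σ (sform y₀ x₀) ≠ 0 := by
    intro h
    exact hc (σ.injective (h.trans (map_zero σ).symm))
  have h1 := key hg hpd (a • y₀) x₀
  rw [sform_smul_left, key hg hpd y₀ x₀, sform_smul_left, map_mul] at h1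
  have hne : lam * σ (sform y₀ x₀) ≠ 0 := mul_ne_zero hg.lam_ne hσc
  apply mul_right_cancel₀ hne
  linear_combination h1.symm

lemma gsq (hn : 2 ≤ n) (hg : IsSymplecticCollineation σ lam g)
    (hpd : ∀ x : Vs K n, sform x (g x) = 0) (x : Vs K n) : g (g x) = lam • x := by
  have h0 : ∀ y, sform y (g (g x) - lam • x) = 0 := by
    intro y
    rw [sform_sub_right, key hg hpd y x, sigma_id hn hg hpd, sform_smul_right]
    ring
  have := sform_nondeg _ h0
  exact sub_eq_zero.mp this

end Aux

theorem pointDomestic_fixes_joining_line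
    {K : Type} [Field K] {n : ℕ} (hn : 2 ≤ n)
    (σ : K ≃+* K) (lam : K) (g : Vs K n → Vs K n)
    (hg : IsSymplecticCollineation σ lam g)
    -- θ is point-domestic:
    (hpd : ∀ x : Vs K n, sform x (g x) = 0) :
    -- the line ⟨p, p^θ⟩ through any non-fixed point p = ⟨x⟩ is fixed by θ …
    (∀ x : Vs K n, x ≠ 0 → g x ∉ span K {x} →
      ∀ y ∈ span K {x, g x}, g y ∈ span K {x, g x}) ∧
    -- … equivalently, g²x ∈ span{x, gx} for every x
    (∀ x : Vs K n, g (g x) ∈ span K {x, g x}) := by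
  have hxmem : ∀ x : Vs K n, x ∈ span K {x, g x} :=
    fun x => subset_span (Set.mem_insert x _)
  have hgxmem : ∀ x : Vs K n, g x ∈ span K {x, g x} :=
    fun x => subset_span (Set.mem_insert_of_mem x rfl)
  constructor
  · intro x _ _ y hy
    obtain ⟨a, b, rfl⟩ := mem_span_pair.mp hy
    rw [hg.map_add, hg.map_smulc, hg.map_smulc, gsq hn hg hpd]
    exact add_mem (smul_mem _ _ (hgxmem x)) (smul_mem _ _ (smul_mem _ _ (hxmem x)))
  · intro x
    rw [gsq hn hg hpd]
    exact smul_mem _ _ (hxmem x)
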